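/- Let (ν_n) be a sequence in (0,1) with ν_n → 0, let (B_n) be a sequence of positive reals with ln(1/ν_n) = o(B_n), and let p_n = 1 − (1 − 1/n)^n. Then lim_{n→∞} (p_n + (1 − p_n) ν_n^{1/B_n})^{B_n} = 0. -/

import Mathlib

open Filter Asymptotics

/-- Let `(ν n)` be a sequence in `(0,1)` with `ν n → 0`, `(B n)` a sequence
of positive reals with `log(1/ν n) = o(B n)`, and `p n = 1 − (1 − 1/n)^n`. Then
`(p n + (1 − p n) (ν n)^(1/B n))^(B n) → 0` as `n → ∞`. -/
theorem stmt15 (ν : ℕ → ℝ) (hν : ∀ n, ν n ∈ Set.Ioo (0:ℝ) 1)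
    (hν0 : Tendsto ν atTop (nhds 0))
    (B : ℕ → ℝ) (hB : ∀ n, 0 < B n)
    (ho : (fun n => Real.log (1 / ν n)) =o[atTop] B) :
    Tendsto
      (fun n : ℕ =>
        ((1 - (1 - 1/(n:ℝ))^n) + (1 - 1/(n:ℝ))^n * (ν n) ^ (1 / B n)) ^ (B n))
      atTop (nhds 0) := by
  set a : ℕ → ℝ := fun n => Real.log (1 / ν n) with ha
  set q : ℕ → ℝ := fun n => (1 - 1/(n:ℝ))^n with hq
  have hνpos : ∀ n, 0 < ν n := fun n => (hν n).1
  have hapos : ∀ n, 0 < a n := fun n =>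
    Real.log_pos ((one_lt_div (hνpos n)).mpr (hν n).2)
  -- a n = - log (ν n)
  have haneg : ∀ n, a n = - Real.log (ν n) := fun n => by
    simp [ha, Real.log_div, (hνpos n).ne']
  -- a → ∞
  have hatop : Tendsto a atTop atTop := by
    have h1 : Tendsto ν atTop (nhdsWithin 0 (Set.Ioi 0)) :=
      tendsto_nhdsWithin_of_tendsto_nhds_of_eventually_within _ hν0
        (Eventually.of_forall fun n => hνpos n)
    have h2 : Tendsto (fun n => Real.log (ν n)) atTop atBot :=
      Real.tendsto_log_nhdsGT_zero.comp h1
    have h3 : Tendsto (fun n => - Real.log (ν n)) atTop atTop :=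
      tendsto_neg_atBot_atTop.comp h2
    exact h3.congr fun n => (haneg n).symm
  -- q bounds
  have hq01 : ∀ n, 0 ≤ q n ∧ q n ≤ 1 := by
    intro n
    cases n with
    | zero => simp [hq]
    | succ m =>
      have h1 : (0:ℝ) < (m:ℝ) + 1 := by positivity
      have h2 : 1/((m:ℝ)+1) ≤ 1 := by
        rw [div_le_one h1]; linarith [Nat.cast_nonneg (α := ℝ) m]
      have h3 : (0:ℝ) ≤ 1 - 1/((m:ℝ)+1) := by linarith
      have h2b : (0:ℝ) ≤ 1/((m:ℝ)+1) := by positivity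
      have h4 : 1 - 1/((m:ℝ)+1) ≤ 1 := by linarith
      constructor
      · simpa [hq] using pow_nonneg h3 _
      · simpa [hq] using pow_le_one₀ h3 h4
  -- eventually q n ≥ 1/4
  have hqlim : Tendsto q atTop (nhds (Real.exp (-1))) := by
    have := Real.tendsto_one_add_div_pow_exp (-1)
    exact this.congr fun n => by simp only [hq, neg_div]; ring_nf
  have hexp4 : (1/4 : ℝ) < Real.exp (-1) := by
    have h4 : Real.exp 1 < 4 := lt_trans Real.exp_one_lt_d9 (by norm_num)
    have hp := Real.exp_pos (-1)
    have hm : Real.exp (-1) * Real.exp 1 = 1 := by rw [← Real.exp_add]; simp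
    nlinarith
  have hqev : ∀ᶠ n in atTop, (1/4 : ℝ) ≤ q n :=
    (hqlim.eventually (eventually_gt_nhds hexp4)).mono fun n h => le_of_lt h
  -- a/B → 0, hence eventually a/B ≤ log 2
  have hdiv : Tendsto (fun n => a n / B n) atTop (nhds 0) :=
    ho.tendsto_div_nhds_zero
  have hdivev : ∀ᶠ n in atTop, a n / B n ≤ Real.log 2 := by
    have hlog2 : (0:ℝ) < Real.log 2 := Real.log_pos (by norm_num)
    exact (hdiv.eventually (eventually_le_nhds hlog2))
  -- t n
  set t : ℕ → ℝ := fun n => (ν n) ^ (1 / B n) with ht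
  have htexp : ∀ n, t n = Real.exp (-(a n / B n)) := by
    intro n
    show (ν n) ^ (1 / B n) = _
    rw [Real.rpow_def_of_pos (hνpos n)]
    congr 1
    rw [haneg n]
    ring
  -- base
  set base : ℕ → ℝ := fun n => (1 - q n) + q n * t n with hbase
  have htpos : ∀ n, 0 < t n := fun n => by rw [htexp]; exact Real.exp_pos _
  have hbasepos : ∀ n, 0 < base n := by
    intro n
    obtain ⟨h0, h1⟩ := hq01 n
    have := htpos n
    rcases lt_or_eq_of_le h1 with h | h
    · have : 0 ≤ q n * t n := mul_nonneg h0 (htpos n).le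
      simp only [hbase]; linarith
    · simp only [hbase, h]; nlinarith
  -- key eventual bound
  have hkey : ∀ᶠ n in atTop, B n * Real.log (base n) ≤ -(a n / 8) := by
    filter_upwards [hqev, hdivev] with n hqn hdn
    have hBn := hB n
    have han := hapos n
    have hx : 0 ≤ a n / B n := div_nonneg han.le hBn.le
    -- 1 - t ≥ (a/B) * t
    have h1 : a n / B n + 1 ≤ Real.exp (a n / B n) := Real.add_one_le_exp _
    have htn : t n = Real.exp (-(a n / B n)) := htexp n
    have hte : Real.exp (-(a n / B n)) * Real.exp (a n / B n) = 1 := by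
      rw [← Real.exp_add]; simp
    have h2 : (a n / B n) * t n + t n ≤ 1 := by
      rw [htn]
      nlinarith [Real.exp_pos (-(a n / B n))]
    -- t ≥ 1/2
    have h3 : (1/2 : ℝ) ≤ t n := by
      rw [htn]
      have : Real.exp (- Real.log 2) ≤ Real.exp (-(a n / B n)) :=
        Real.exp_le_exp.mpr (by linarith)
      rw [Real.exp_neg, Real.exp_log (by norm_num : (0:ℝ) < 2)] at this
      linarith
    -- B*(1 - t) ≥ a/2
    have h4 : a n / 2 ≤ B n * (1 - t n) := by
      have : (a n / B n) * (1/2) ≤ (a n / B n) * t n := by nlinarith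
      have h5 : (a n / B n) * t n ≤ 1 - t n := by linarith
      calc a n / 2 = B n * ((a n / B n) * (1/2)) := by field_simp
        _ ≤ B n * ((a n / B n) * t n) := by nlinarith
        _ ≤ B n * (1 - t n) := by nlinarith
    -- log base ≤ base - 1 = -q(1-t)
    have h6 : Real.log (base n) ≤ base n - 1 := Real.log_le_sub_one_of_pos (hbasepos n)
    have h7 : base n - 1 = - (q n * (1 - t n)) := by simp only [hbase]; ring
    have h8 : B n * Real.log (base n) ≤ - (q n * (B n * (1 - t n))) := by
      have := mul_le_mul_of_nonneg_left h6 hBn.le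
      rw [h7] at this
      nlinarith
    have h9 : a n / 8 ≤ q n * (B n * (1 - t n)) := by nlinarith
    linarith
  -- conclude
  have hbot : Tendsto (fun n => B n * Real.log (base n)) atTop atBot := by
    apply tendsto_atBot_mono' atTop hkey
    have : Tendsto (fun n => a n / 8) atTop atTop :=
      hatop.atTop_div_const (by norm_num)
    exact tendsto_neg_atTop_atBot.comp this
  have hfinal : Tendsto (fun n => Real.exp (B n * Real.log (base n))) atTop (nhds 0) :=
    Real.tendsto_exp_atBot.comp hbot
  apply hfinal.congr
  intro n
  rw [mul_comm, ← Real.rpow_def_of_pos (hbasepos n)]
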